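/- For arcs of law ν_m = (1-2m)δ₀ + 2m δ_{1/2} on [0,1/2] (m ∈ (0,1/4]), the probability of NOT covering the circle of perimeter 1 by n such i.i.d. uniformly-centered arcs equals 2 n m (1-m)^{n-1} + (1-2m)^n. -/

import Mathlib

open MeasureTheory

/-- `n` arcs on the circle of perimeter `1`, the `i`-th with left endpoint (center) `c i` and
normalized length `ℓ i`, cover the whole circle. -/
def coversCircle {n : ℕ} (c : Fin n → AddCircle (1:ℝ)) (ℓ : Fin n → ℝ) : Prop :=
  ∀ x : AddCircle (1:ℝ), ∃ i : Fin n, ∃ t : ℝ, t ∈ Set.Icc 0 (ℓ i) ∧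
    x = c i + (t : AddCircle (1:ℝ))

/-- `P(ν, n)`: the probability that `n` i.i.d. arcs with independent uniformly distributed
positions, whose normalized lengths are i.i.d. with law `ν`, cover the circle of perimeter 1. -/
noncomputable def coverProb (ν : Measure ℝ) [SigmaFinite ν] (n : ℕ) : ℝ :=
  ((Measure.pi fun _ : Fin n => (volume : Measure (AddCircle (1:ℝ))).prod ν)
    {p | coversCircle (fun i => (p i).1) (fun i => (p i).2)}).toReal

local notation "𝕋" => AddCircle (1:ℝ)

-- basic representative lemmas
lemma mk_inj {a b : ℝ} (ha : a ∈ Set.Ico (0:ℝ) 1) (hb : b ∈ Set.Ico (0:ℝ) 1)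
    (h : (a : 𝕋) = b) : a = b := by
  have h01 : (0:ℝ) + 1 = 1 := by norm_num
  exact (AddCircle.coe_eq_coe_iff_of_mem_Ico (by rw [h01]; exact ha) (by rw [h01]; exact hb)).mp h

lemma exists_rep (z : 𝕋) : ∃ b, b ∈ Set.Ico (0:ℝ) 1 ∧ (b : 𝕋) = z := by
  obtain ⟨b, hb, h⟩ := AddCircle.eq_coe_Ico z
  exact ⟨b, hb, h⟩

lemma coe_one_eq_zero : ((1:ℝ) : 𝕋) = 0 := AddCircle.coe_period (1:ℝ)

def Shalf : Set 𝕋 := ((↑) : ℝ → 𝕋) '' Set.Ico 0 (1/2)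

lemma Shalf_meas : MeasurableSet Shalf := by
  have : Shalf = (((↑) : ℝ → 𝕋) '' Set.Ioo 0 (1/2)) ∪ {(0:𝕋)} := by
    ext z; constructor
    · rintro ⟨t, ⟨ht0, ht1⟩, rfl⟩
      rcases eq_or_lt_of_le ht0 with h | h
      · right; simp [← h]
      · left; exact ⟨t, ⟨h, ht1⟩, rfl⟩
    · rintro (⟨t, ⟨ht0, ht1⟩, rfl⟩ | h)
      · exact ⟨t, ⟨le_of_lt ht0, ht1⟩, rfl⟩
      · exact ⟨0, ⟨le_refl _, by norm_num⟩, by simpa using h.symm⟩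
  rw [this]
  exact ((QuotientAddGroup.isOpenMap_coe _ isOpen_Ioo).measurableSet).union (measurableSet_singleton _)

lemma vol_singleton (z : 𝕋) : volume ({z} : Set 𝕋) = 0 := by
  rw [AddCircle.add_projection_respects_measure (1:ℝ) 0 (measurableSet_singleton z)]
  obtain ⟨b, hb, rfl⟩ := exists_rep z
  have hsub : (QuotientAddGroup.mk ⁻¹' {((b:ℝ) : 𝕋)} ∩ Set.Ioc 0 (0 + 1) : Set ℝ)
      ⊆ {b, b + 1} := by
    intro x ⟨hx1, hx2⟩
    have hx : (x : 𝕋) = (b : 𝕋) := hx1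
    have : ((x - b : ℝ) : 𝕋) = 0 := by
      rw [AddCircle.coe_sub, hx, sub_self]
    obtain ⟨nn, hnn⟩ := (AddCircle.coe_eq_zero_iff _).mp this
    have hnn' : (nn : ℝ) = x - b := by simpa using hnn
    have hx0 : 0 < x := hx2.1
    have hx1' : x ≤ 0 + 1 := hx2.2
    have hb0 : 0 ≤ b := hb.1
    have hb1 : b < 1 := hb.2
    have hn1 : (-1 : ℝ) < (nn:ℝ) := by rw [hnn']; linarith
    have hn2 : (nn:ℝ) ≤ 1 := by rw [hnn']; linarith
    have hn1' : (-1:ℤ) < nn := by exact_mod_cast hn1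
    have hn2' : nn ≤ (1:ℤ) := by exact_mod_cast hn2
    interval_cases nn
    · left; have : x - b = 0 := by rw [← hnn']; norm_num
      linarith [this]
    · right; have : x - b = 1 := by rw [← hnn']; norm_num
      have : x = b + 1 := by linarith
      simp [this]
  refine le_antisymm ?_ zero_le
  calc volume _ ≤ volume ({b, b+1} : Set ℝ) := measure_mono hsub
    _ = 0 := by
        refine le_antisymm ?_ zero_le
        calc volume ({b, b+1} : Set ℝ) ≤ volume ({b} : Set ℝ) + volume ({b+1} : Set ℝ) :=
              measure_union_le _ _
          _ = 0 := by simp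

lemma Shalf_vol : volume Shalf = ENNReal.ofReal (1/2) := by
  rw [AddCircle.add_projection_respects_measure (1:ℝ) 0 Shalf_meas]
  have hset : (QuotientAddGroup.mk ⁻¹' Shalf ∩ Set.Ioc 0 (0 + 1) : Set ℝ)
      = Set.Ioo 0 (1/2) ∪ {1} := by
    ext x
    simp only [Set.mem_inter_iff, Set.mem_preimage, Set.mem_union, Set.mem_Ioo, Set.mem_Ioc,
      Set.mem_singleton_iff]
    constructor
    · rintro ⟨hx1, hx2⟩
      obtain ⟨u, hu, hux⟩ := hx1
      by_cases hx' : x = 1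
      · right; exact hx'
      · left
        have hxIco : x ∈ Set.Ico (0:ℝ) 1 := ⟨le_of_lt hx2.1, lt_of_le_of_ne (by linarith [hx2.2]) hx'⟩
        have : u = x := mk_inj ⟨hu.1, by linarith [hu.2]⟩ hxIco hux
        subst this
        exact ⟨hx2.1, hu.2⟩
    · rintro (⟨h1, h2⟩ | h1)
      · exact ⟨⟨x, ⟨le_of_lt h1, h2⟩, rfl⟩, ⟨h1, by linarith⟩⟩
      · subst h1
        refine ⟨⟨0, ⟨le_refl _, by norm_num⟩, ?_⟩, by norm_num⟩
        simpa using coe_one_eq_zero.symm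
  rw [hset, measure_union (by norm_num) (measurableSet_singleton _), Real.volume_Ioo,
    Real.volume_singleton, add_zero]
  norm_num

lemma noncover_iff {n : ℕ} (c : Fin n → 𝕋) (ℓ : Fin n → ℝ)
    (hL : ∀ j, ℓ j = 0 ∨ ℓ j = 1/2) :
    ¬ coversCircle c ℓ ↔ (∀ j, ℓ j ≠ 1/2) ∨
      ∃ i, ℓ i = 1/2 ∧ ∀ j, j ≠ i → ℓ j = 1/2 →
        (c j - c i ∈ Shalf ∧ (c j = c i → i < j)) := by
  constructor
  · intro hnc
    by_cases hA : ∀ j, ℓ j ≠ 1/2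
    · exact Or.inl hA
    push_neg at hA
    right
    rw [coversCircle] at hnc
    push_neg at hnc
    obtain ⟨x, hx⟩ := hnc
    -- representatives of c j - x
    have hrep := fun j => exists_rep (c j - x)
    choose v hv1 hv2 using hrep
    -- for half arcs, v j ∈ (0, 1/2)
    have hvh : ∀ j, ℓ j = 1/2 → 0 < v j ∧ v j < 1/2 := by
      intro j hj
      constructor
      · rcases lt_or_eq_of_le (hv1 j).1 with h | h
        · exact h
        · exfalso
          have : c j - x = 0 := by rw [← hv2 j, ← h]; simp
          have hxc : x = c j + ((0:ℝ) : 𝕋) := by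
            rw [sub_eq_zero] at this
            rw [this]; simp
          exact hx j 0 ⟨le_refl _, by rw [hj]; norm_num⟩ hxc
      · by_contra hge
        push_neg at hge
        set t : ℝ := 1 - v j with ht
        have hxc : x = c j + (t : 𝕋) := by
          have : (t : 𝕋) = -((v j : ℝ) : 𝕋) := by
            rw [ht, AddCircle.coe_sub, coe_one_eq_zero, zero_sub]
          rw [this, hv2 j]
          abel
        have htmem : t ∈ Set.Icc 0 (ℓ j) := by
          rw [hj]; exact ⟨by linarith [(hv1 j).2], by linarith⟩
        exact hx j t htmem hxc
    obtain ⟨j0, hj0⟩ := hA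
    set J : Finset (Fin n) := Finset.univ.filter (fun j => ℓ j = 1/2) with hJdef
    have hJne : J.Nonempty := ⟨j0, by simp [hJdef, hj0]⟩
    set vmin := J.inf' hJne v with hvmin
    set K : Finset (Fin n) := J.filter (fun j => v j = vmin) with hKdef
    have hKne : K.Nonempty := by
      obtain ⟨j1, hj1J, hj1⟩ := Finset.exists_mem_eq_inf' hJne v
      exact ⟨j1, by simp [hKdef, hj1J, hj1.symm]; exact hvmin.symm⟩
    set i := K.min' hKne with hidef
    have hiK : i ∈ K := K.min'_mem hKne
    have hiJ : i ∈ J := (Finset.mem_filter.mp hiK).1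
    have hvi : v i = vmin := (Finset.mem_filter.mp hiK).2
    have hiℓ : ℓ i = 1/2 := (Finset.mem_filter.mp hiJ).2
    refine ⟨i, hiℓ, ?_⟩
    intro j hji hjℓ
    have hjJ : j ∈ J := by simp [hJdef, hjℓ]
    have hle : v i ≤ v j := by rw [hvi]; exact Finset.inf'_le v hjJ
    have hsub : ((v j - v i : ℝ) : 𝕋) = c j - c i := by
      rw [AddCircle.coe_sub, hv2 j, hv2 i]; abel
    constructor
    · exact ⟨v j - v i, ⟨by linarith, by linarith [(hvh j hjℓ).2, (hvh i hiℓ).1]⟩, hsub⟩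
    · intro hcc
      have : v j = v i := by
        apply mk_inj (hv1 j) (hv1 i)
        rw [hv2 j, hv2 i, hcc]
      have hjK : j ∈ K := by simp [hKdef, hjJ, this, hvi]
      exact lt_of_le_of_ne (K.min'_le j hjK) (Ne.symm hji)
  · rintro (hA | ⟨i, hiℓ, hcond⟩) hcov
    · -- all arcs are points
      have hall : ∀ x : 𝕋, ∃ j, x = c j := by
        intro x
        obtain ⟨j, t, ht, hxt⟩ := hcov x
        rcases hL j with h0 | h0
        · have : t = 0 := le_antisymm (by rw [← h0]; exact ht.2) ht.1
          subst this
          exact ⟨j, by simpa using hxt⟩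
        · exact absurd h0 (hA j)
      have hIcoInf : (Set.Ico (0:ℝ) 1).Infinite := Set.Ico_infinite (by norm_num)
      have hinj : Set.InjOn (fun t : ℝ => (t : 𝕋)) (Set.Ico 0 1) := by
        intro a ha b hb hab
        exact mk_inj ha hb hab
      have huniv : (Set.univ : Set 𝕋).Infinite := by
        have himg : ((fun t : ℝ => (t : 𝕋)) '' Set.Ico 0 1) = Set.univ := by
          ext z; simp only [Set.mem_image, Set.mem_univ, iff_true]
          obtain ⟨b, hb, hbz⟩ := exists_rep z
          exact ⟨b, hb, hbz⟩
        rw [← himg]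
        exact hIcoInf.image hinj
      have : (Set.univ : Set 𝕋) ⊆ Set.range c := by
        intro x _
        obtain ⟨j, hj⟩ := hall x
        exact ⟨j, hj.symm⟩
      exact (Set.finite_range c).not_infinite (huniv.mono this)
    · -- a leading half arc exists
      have hrep := fun j => exists_rep (c j - c i)
      choose u hu1 hu2 using hrep
      have hui : u i = 0 := by
        apply mk_inj (hu1 i) ⟨le_refl _, by norm_num⟩
        rw [hu2 i]; simp
      set J : Finset (Fin n) := Finset.univ.filter (fun j => ℓ j = 1/2) with hJdef
      have hiJ : i ∈ J := by simp [hJdef, hiℓ]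
      have hJne : J.Nonempty := ⟨i, hiJ⟩
      have huh : ∀ j ∈ J, u j < 1/2 := by
        intro j hjJ
        have hjℓ : ℓ j = 1/2 := (Finset.mem_filter.mp hjJ).2
        by_cases hji : j = i
        · subst hji; rw [hui]; norm_num
        · obtain ⟨⟨w, hw, hwe⟩, _⟩ := hcond j hji hjℓ
          have : u j = w := by
            apply mk_inj (hu1 j) ⟨hw.1, by linarith [hw.2]⟩
            rw [hu2 j, hwe]
          rw [this]; exact hw.2
      set M := J.sup' hJne u with hMdef
      have hM2 : M < 1/2 := by
        rw [hMdef, Finset.sup'_lt_iff]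
        exact huh
      have hM0 : 0 ≤ M := le_trans (hu1 i).1 (Finset.le_sup' u hiJ)
      obtain ⟨s, hsIoo, hsnr⟩ : ∃ s, s ∈ Set.Ioo (M + 1/2) 1 ∧ s ∉ Set.range u := by
        have h1 : (Set.Ioo (M + 1/2) 1).Infinite := Set.Ioo_infinite (by linarith)
        obtain ⟨s, hs⟩ := (h1.diff (Set.finite_range u)).nonempty
        exact ⟨s, hs.1, hs.2⟩
      obtain ⟨j, t, ht, hxt⟩ := hcov (c i + (s : 𝕋))
      have hkey : ((s : ℝ) : 𝕋) = ((u j + t : ℝ) : 𝕋) := by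
        rw [AddCircle.coe_add, hu2 j]
        have : (c i + (s:𝕋)) - c i = (c j + (t:𝕋)) - c i := by rw [← hxt]
        calc ((s:ℝ) : 𝕋) = (c i + (s:𝕋)) - c i := by abel
          _ = (c j + (t:𝕋)) - c i := this
          _ = (c j - c i) + (t:𝕋) := by abel
      have hs01 : s ∈ Set.Ico (0:ℝ) 1 := ⟨by linarith [hsIoo.1], hsIoo.2⟩
      rcases hL j with h0 | h0
      · -- point arc
        have : t = 0 := le_antisymm (by rw [← h0]; exact ht.2) ht.1
        subst this
        have : s = u j := by
          apply mk_inj hs01 (by simpa using hu1 j)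
          simpa using hkey
        exact hsnr ⟨j, this.symm⟩
      · -- half arc
        have hjJ : j ∈ J := by simp [hJdef, h0]
        have htle : t ≤ 1/2 := by rw [← h0]; exact ht.2
        have hut : u j + t ∈ Set.Ico (0:ℝ) 1 := by
          constructor
          · linarith [(hu1 j).1, ht.1]
          · linarith [huh j hjJ]
        have hse : s = u j + t := mk_inj hs01 hut hkey
        have : u j ≤ M := Finset.le_sup' u hjJ
        linarith [hsIoo.1]

instance : IsProbabilityMeasure (volume : Measure 𝕋) :=
  ⟨by rw [AddCircle.measure_univ]; norm_num⟩

lemma vol_sub_mem (c : 𝕋) : volume {x : 𝕋 | x - c ∈ Shalf} = ENNReal.ofReal (1/2) := by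
  have : {x : 𝕋 | x - c ∈ Shalf} = (fun x : 𝕋 => (-c) + x) ⁻¹' Shalf := by
    ext x; simp [sub_eq_neg_add, add_comm]
  rw [this, measure_preimage_add, Shalf_vol]

lemma factor_measure (m : ℝ) (hm0 : 0 < m) (hm4 : m ≤ 1/4) (ν : Measure ℝ) [SigmaFinite ν]
    (hν2 : ν {(1/2:ℝ)} = ENNReal.ofReal (2*m))
    (hν2c : ν ({(1/2:ℝ)}ᶜ) = ENNReal.ofReal (1-2*m))
    (c : 𝕋) (b : Prop) [Decidable b] :
    (volume.prod ν) {w : 𝕋 × ℝ | w.2 = 1/2 → (w.1 - c ∈ Shalf ∧ (w.1 = c → b))}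
      = ENNReal.ofReal (1 - m) := by
  set G : Set 𝕋 := {x : 𝕋 | x - c ∈ Shalf ∧ (x = c → b)} with hGdef
  have hGvol : volume G = ENNReal.ofReal (1/2) := by
    by_cases hb : b
    · have : G = {x : 𝕋 | x - c ∈ Shalf} := by ext x; simp [hGdef, hb]
      rw [this, vol_sub_mem]
    · have : G = {x : 𝕋 | x - c ∈ Shalf} \ {c} := by
        ext x; simp only [hGdef, Set.mem_setOf_eq, Set.mem_diff, Set.mem_singleton_iff]
        constructor
        · rintro ⟨h1, h2⟩; exact ⟨h1, fun h => hb (h2 h)⟩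
        · rintro ⟨h1, h2⟩; exact ⟨h1, fun h => absurd h h2⟩
      rw [this, measure_diff_null (vol_singleton c), vol_sub_mem]
  have hGmeas : MeasurableSet G := by
    have h1 : MeasurableSet {x : 𝕋 | x - c ∈ Shalf} :=
      (measurable_id.sub_const c) Shalf_meas
    by_cases hb : b
    · have : G = {x : 𝕋 | x - c ∈ Shalf} := by ext x; simp [hGdef, hb]
      rw [this]; exact h1
    · have : G = {x : 𝕋 | x - c ∈ Shalf} \ {c} := by
        ext x; simp only [hGdef, Set.mem_setOf_eq, Set.mem_diff, Set.mem_singleton_iff]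
        constructor
        · rintro ⟨h1', h2⟩; exact ⟨h1', fun h => hb (h2 h)⟩
        · rintro ⟨h1', h2⟩; exact ⟨h1', fun h => absurd h h2⟩
      rw [this]; exact h1.diff (measurableSet_singleton _)
  have hset : {w : 𝕋 × ℝ | w.2 = 1/2 → (w.1 - c ∈ Shalf ∧ (w.1 = c → b))}
      = ((Set.univ : Set 𝕋) ×ˢ ({(1/2:ℝ)}ᶜ)) ∪ (G ×ˢ ({(1/2:ℝ)} : Set ℝ)) := by
    ext w
    simp only [Set.mem_setOf_eq, Set.mem_union, Set.mem_prod, Set.mem_univ, true_and,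
      Set.mem_compl_iff, Set.mem_singleton_iff, hGdef]
    by_cases hw : w.2 = 1/2 <;> (simp [hw]; try tauto)
  rw [hset, measure_union ?hdisj ((hGmeas.prod (measurableSet_singleton _)))]
  case hdisj =>
    rw [Set.disjoint_left]
    rintro w ⟨_, hw1⟩ ⟨_, hw2⟩
    exact hw1 hw2
  rw [Measure.prod_prod, Measure.prod_prod, measure_univ, one_mul, hν2c, hν2, hGvol,
    ← ENNReal.ofReal_mul (by norm_num)]
  rw [← ENNReal.ofReal_add (by linarith) (by linarith [hm0])]
  congr 1
  ring

def Eset {n : ℕ} (i : Fin n) : Set (Fin n → 𝕋 × ℝ) :=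
  {p | (p i).2 = 1/2 ∧ ∀ j, j ≠ i → ((p j).2 = 1/2 →
    ((p j).1 - (p i).1 ∈ Shalf ∧ ((p j).1 = (p i).1 → i < j)))}

lemma Eset_measure {k : ℕ} (m : ℝ) (hm0 : 0 < m) (hm4 : m ≤ 1/4)
    (ν : Measure ℝ) [IsProbabilityMeasure ν]
    (hν2 : ν {(1/2:ℝ)} = ENNReal.ofReal (2*m))
    (hν2c : ν ({(1/2:ℝ)}ᶜ) = ENNReal.ofReal (1-2*m))
    (i : Fin (k+1)) :
    Measure.pi (fun _ : Fin (k+1) => (volume : Measure 𝕋).prod ν) (Eset i)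
      = ENNReal.ofReal (2*m) * ENNReal.ofReal (1-m) ^ k := by
  classical
  set μ0 : Measure (𝕋 × ℝ) := (volume : Measure 𝕋).prod ν with hμ0
  set μR : Measure (Fin k → 𝕋 × ℝ) := Measure.pi (fun _ : Fin k => μ0) with hμR
  set e := MeasurableEquiv.piFinSuccAbove (fun _ : Fin (k+1) => 𝕋 × ℝ) i with he
  have hmp : MeasurePreserving e
      (Measure.pi (fun _ : Fin (k+1) => μ0)) (μ0.prod μR) :=
    measurePreserving_piFinSuccAbove (fun _ : Fin (k+1) => μ0) i
  set F : Set ((𝕋 × ℝ) × (Fin k → 𝕋 × ℝ)) :=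
    {q | q.1.2 = 1/2 ∧ ∀ r : Fin k, ((q.2 r).2 = 1/2 →
      ((q.2 r).1 - q.1.1 ∈ Shalf ∧ ((q.2 r).1 = q.1.1 → i < i.succAbove r)))} with hF
  have hEF : Eset i = e ⁻¹' F := by
    ext p
    simp only [Eset, Set.mem_setOf_eq, Set.mem_preimage, hF, he,
      MeasurableEquiv.piFinSuccAbove_apply]
    constructor
    · rintro ⟨h1, h2⟩
      exact ⟨h1, fun r hr => h2 _ (Fin.succAbove_ne i r) hr⟩
    · rintro ⟨h1, h2⟩
      refine ⟨h1, fun j hj hℓ => ?_⟩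
      obtain ⟨r, rfl⟩ := Fin.exists_succAbove_eq hj
      exact h2 r hℓ
  -- measurability of F
  have hmeas_sub : ∀ r : Fin k, Measurable fun q : (𝕋 × ℝ) × (Fin k → 𝕋 × ℝ) =>
      (q.2 r).1 - q.1.1 := fun r =>
    (((measurable_pi_apply r).comp measurable_snd).fst).sub (measurable_fst.fst)
  have hFmeas : MeasurableSet F := by
    have h1 : MeasurableSet {q : (𝕋 × ℝ) × (Fin k → 𝕋 × ℝ) | q.1.2 = 1/2} :=
      measurable_fst.snd (measurableSet_singleton (1/2 : ℝ))
    have h2 : ∀ r : Fin k, MeasurableSet {q : (𝕋 × ℝ) × (Fin k → 𝕋 × ℝ) |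
        (q.2 r).2 = 1/2 → ((q.2 r).1 - q.1.1 ∈ Shalf ∧ ((q.2 r).1 = q.1.1 → i < i.succAbove r))} := by
      intro r
      have ha : MeasurableSet {q : (𝕋 × ℝ) × (Fin k → 𝕋 × ℝ) | (q.2 r).2 = 1/2} :=
        (((measurable_pi_apply r).comp measurable_snd).snd) (measurableSet_singleton (1/2 : ℝ))
      have hb : MeasurableSet {q : (𝕋 × ℝ) × (Fin k → 𝕋 × ℝ) | (q.2 r).1 - q.1.1 ∈ Shalf} :=
        (hmeas_sub r) Shalf_meas
      have hc : MeasurableSet {q : (𝕋 × ℝ) × (Fin k → 𝕋 × ℝ) | (q.2 r).1 = q.1.1} :=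
        measurableSet_eq_fun (((measurable_pi_apply r).comp measurable_snd).fst)
          (measurable_fst.fst)
      have hd : MeasurableSet {q : (𝕋 × ℝ) × (Fin k → 𝕋 × ℝ) | i < i.succAbove r} :=
        MeasurableSet.const _
      have : {q : (𝕋 × ℝ) × (Fin k → 𝕋 × ℝ) |
          (q.2 r).2 = 1/2 → ((q.2 r).1 - q.1.1 ∈ Shalf ∧ ((q.2 r).1 = q.1.1 → i < i.succAbove r))}
          = {q | (q.2 r).2 = 1/2}ᶜ ∪ ({q | (q.2 r).1 - q.1.1 ∈ Shalf}
              ∩ ({q | (q.2 r).1 = q.1.1}ᶜ ∪ {q | i < i.succAbove r})) := by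
        ext q
        simp only [Set.mem_union, Set.mem_inter_iff, Set.mem_compl_iff, Set.mem_setOf_eq]
        tauto
      rw [this]
      exact ha.compl.union (hb.inter (hc.compl.union hd))
    have : F = {q : (𝕋 × ℝ) × (Fin k → 𝕋 × ℝ) | q.1.2 = 1/2} ∩ ⋂ r : Fin k,
        {q | (q.2 r).2 = 1/2 → ((q.2 r).1 - q.1.1 ∈ Shalf ∧ ((q.2 r).1 = q.1.1 → i < i.succAbove r))} := by
      ext q
      simp only [hF, Set.mem_setOf_eq, Set.mem_inter_iff, Set.mem_iInter]
    rw [this]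
    exact h1.inter (MeasurableSet.iInter h2)
  have hmain : Measure.pi (fun _ : Fin (k+1) => μ0) (Eset i) = (μ0.prod μR) F := by
    rw [hEF]
    exact hmp.measure_preimage hFmeas.nullMeasurableSet
  rw [hmain, Measure.prod_apply hFmeas]
  have hslice : ∀ a : 𝕋 × ℝ, μR (Prod.mk a ⁻¹' F)
      = Set.indicator ((Set.univ : Set 𝕋) ×ˢ ({(1/2:ℝ)} : Set ℝ))
          (fun _ => ENNReal.ofReal (1-m) ^ k) a := by
    intro a
    by_cases ha : a.2 = 1/2
    · have hpre : Prod.mk a ⁻¹' F = Set.pi Set.univ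
          (fun r : Fin k => {w : 𝕋 × ℝ | w.2 = 1/2 →
            (w.1 - a.1 ∈ Shalf ∧ (w.1 = a.1 → i < i.succAbove r))}) := by
        ext r
        simp only [Set.mem_preimage, hF, Set.mem_setOf_eq, Set.mem_pi, Set.mem_univ,
          forall_true_left, ha, true_and]
      rw [hpre, hμR, Measure.pi_pi]
      have heach : ∀ r : Fin k, μ0 {w : 𝕋 × ℝ | w.2 = 1/2 →
          (w.1 - a.1 ∈ Shalf ∧ (w.1 = a.1 → i < i.succAbove r))} = ENNReal.ofReal (1-m) :=
        fun r => factor_measure m hm0 hm4 ν hν2 hν2c a.1 _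
      rw [Finset.prod_congr rfl (fun r _ => heach r), Finset.prod_const, Finset.card_univ,
        Fintype.card_fin]
      exact (Set.indicator_of_mem (⟨Set.mem_univ a.1, ha⟩ : a ∈ (Set.univ : Set 𝕋) ×ˢ ({(1/2:ℝ)} : Set ℝ)) (fun _ => ENNReal.ofReal (1-m) ^ k)).symm
    · have hpre : Prod.mk a ⁻¹' F = ∅ := by
        ext r
        simp only [Set.mem_preimage, hF, Set.mem_setOf_eq, Set.mem_empty_iff_false, iff_false]
        rintro ⟨h1, -⟩
        exact ha h1
      rw [hpre, measure_empty]
      exact (Set.indicator_of_notMem (fun h => ha h.2) (fun _ => ENNReal.ofReal (1-m) ^ k)).symm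
  rw [lintegral_congr hslice, lintegral_indicator (MeasurableSet.univ.prod (measurableSet_singleton _)),
    setLIntegral_const, Measure.prod_prod, measure_univ, one_mul, hν2]
  ring

lemma Eset_meas {n : ℕ} (i : Fin n) : MeasurableSet (Eset i) := by
  have h1 : MeasurableSet {p : Fin n → 𝕋 × ℝ | (p i).2 = 1/2} :=
    ((measurable_pi_apply i).snd) (measurableSet_singleton _)
  have h2 : ∀ j : Fin n, MeasurableSet {p : Fin n → 𝕋 × ℝ | j ≠ i → ((p j).2 = 1/2 →
      ((p j).1 - (p i).1 ∈ Shalf ∧ ((p j).1 = (p i).1 → i < j)))} := by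
    intro j
    have ha : MeasurableSet {p : Fin n → 𝕋 × ℝ | (p j).2 = 1/2} :=
      ((measurable_pi_apply j).snd) (measurableSet_singleton _)
    have hb : MeasurableSet {p : Fin n → 𝕋 × ℝ | (p j).1 - (p i).1 ∈ Shalf} :=
      (((measurable_pi_apply j).fst).sub ((measurable_pi_apply i).fst)) Shalf_meas
    have hc : MeasurableSet {p : Fin n → 𝕋 × ℝ | (p j).1 = (p i).1} :=
      measurableSet_eq_fun ((measurable_pi_apply j).fst) ((measurable_pi_apply i).fst)
    have hd : MeasurableSet {p : Fin n → 𝕋 × ℝ | i < j} := MeasurableSet.const _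
    have he : MeasurableSet {p : Fin n → 𝕋 × ℝ | j ≠ i} := MeasurableSet.const _
    have hset : {p : Fin n → 𝕋 × ℝ | j ≠ i → ((p j).2 = 1/2 →
        ((p j).1 - (p i).1 ∈ Shalf ∧ ((p j).1 = (p i).1 → i < j)))}
        = {p : Fin n → 𝕋 × ℝ | j ≠ i}ᶜ ∪ ({p : Fin n → 𝕋 × ℝ | (p j).2 = 1/2}ᶜ
            ∪ ({p : Fin n → 𝕋 × ℝ | (p j).1 - (p i).1 ∈ Shalf}
              ∩ ({p : Fin n → 𝕋 × ℝ | (p j).1 = (p i).1}ᶜ ∪ {p : Fin n → 𝕋 × ℝ | i < j}))) := by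
      ext p
      simp only [Set.mem_union, Set.mem_inter_iff, Set.mem_compl_iff, Set.mem_setOf_eq]
      tauto
    rw [hset]
    exact he.compl.union (ha.compl.union (hb.inter (hc.compl.union hd)))
  have : Eset i = {p : Fin n → 𝕋 × ℝ | (p i).2 = 1/2} ∩ ⋂ j : Fin n,
      {p | j ≠ i → ((p j).2 = 1/2 → ((p j).1 - (p i).1 ∈ Shalf ∧ ((p j).1 = (p i).1 → i < j)))} := by
    ext p
    simp only [Eset, Set.mem_setOf_eq, Set.mem_inter_iff, Set.mem_iInter]
  rw [this]
  exact h1.inter (MeasurableSet.iInter h2)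

theorem noncover_two_point' (m : ℝ) (hm : m ∈ Set.Ioc (0:ℝ) (1/4)) (n : ℕ) (hn : 1 ≤ n)
    (ν : Measure ℝ) [IsProbabilityMeasure ν]
    (hν : ν = ENNReal.ofReal (1 - 2*m) • Measure.dirac (0:ℝ)
        + ENNReal.ofReal (2*m) • Measure.dirac (1/2 : ℝ)) :
    1 - (((Measure.pi fun _ : Fin n => (volume : Measure (AddCircle (1:ℝ))).prod ν)
    {p | coversCircle (fun i => (p i).1) (fun i => (p i).2)}).toReal)
    = 2*n*m*(1-m)^(n-1) + (1-2*m)^n := by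
  classical
  obtain ⟨hm0, hm4⟩ := hm
  obtain ⟨k, rfl⟩ : ∃ k, n = k + 1 := ⟨n - 1, (Nat.succ_pred_eq_of_pos hn).symm⟩
  have hν2 : ν {(1/2:ℝ)} = ENNReal.ofReal (2*m) := by
    rw [hν]
    rw [Measure.add_apply, Measure.smul_apply, Measure.smul_apply,
      Measure.dirac_apply' _ (measurableSet_singleton _),
      Measure.dirac_apply' _ (measurableSet_singleton _)]
    rw [Set.indicator_of_notMem (by norm_num) _, Set.indicator_of_mem (by norm_num) _]
    simp
  have hν2c : ν ({(1/2:ℝ)}ᶜ) = ENNReal.ofReal (1-2*m) := by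
    rw [measure_compl (measurableSet_singleton _) (measure_ne_top ν _), measure_univ, hν2,
      ← ENNReal.ofReal_one, ← ENNReal.ofReal_sub _ (by linarith)]
  have hνL : ν ({0, 1/2} : Set ℝ) = 1 := by
    rw [hν]
    have hms : MeasurableSet ({0, 1/2} : Set ℝ) :=
      (measurableSet_singleton _).insert _
    rw [Measure.add_apply, Measure.smul_apply, Measure.smul_apply,
      Measure.dirac_apply' _ hms, Measure.dirac_apply' _ hms]
    rw [Set.indicator_of_mem (by norm_num) _, Set.indicator_of_mem (by norm_num) _]
    simp only [Pi.one_apply, smul_eq_mul, mul_one]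
    rw [← ENNReal.ofReal_add (by linarith) (by linarith)]
    norm_num
  set μ := Measure.pi fun _ : Fin (k+1) => (volume : Measure 𝕋).prod ν with hμdef
  haveI : IsProbabilityMeasure μ := by
    rw [hμdef]; infer_instance
  set Cov : Set (Fin (k+1) → 𝕋 × ℝ) :=
    {p | coversCircle (fun i => (p i).1) (fun i => (p i).2)} with hCovdef
  set Lset : Set (Fin (k+1) → 𝕋 × ℝ) :=
    Set.pi Set.univ (fun _ => (Set.univ : Set 𝕋) ×ˢ ({0, 1/2} : Set ℝ)) with hLdef
  have hLmeas : MeasurableSet Lset :=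
    MeasurableSet.univ_pi fun _ => MeasurableSet.univ.prod ((measurableSet_singleton _).insert _)
  have hLvol : μ Lset = 1 := by
    have h1 : (volume : Measure 𝕋).prod ν ((Set.univ : Set 𝕋) ×ˢ ({0, 1/2} : Set ℝ)) = 1 := by
      rw [Measure.prod_prod, measure_univ, one_mul, hνL]
    rw [hμdef, hLdef, Measure.pi_pi, Finset.prod_congr rfl (fun _ _ => h1), Finset.prod_const,
      one_pow]
  have hLc : μ Lsetᶜ = 0 := by
    rw [measure_compl hLmeas (measure_ne_top μ _), hLvol, measure_univ, tsub_self]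
  set Aset : Set (Fin (k+1) → 𝕋 × ℝ) :=
    Set.pi Set.univ (fun _ => (Set.univ : Set 𝕋) ×ˢ ({(1/2:ℝ)}ᶜ)) with hAdef
  have hAmeas : MeasurableSet Aset :=
    MeasurableSet.univ_pi fun _ => MeasurableSet.univ.prod (measurableSet_singleton _).compl
  have hAvol : μ Aset = ENNReal.ofReal (1-2*m) ^ (k+1) := by
    have h1 : (volume : Measure 𝕋).prod ν ((Set.univ : Set 𝕋) ×ˢ ({(1/2:ℝ)}ᶜ))
        = ENNReal.ofReal (1-2*m) := by
      rw [Measure.prod_prod, measure_univ, one_mul, hν2c]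
    rw [hμdef, hAdef, Measure.pi_pi, Finset.prod_congr rfl (fun _ _ => h1), Finset.prod_const,
      Finset.card_univ, Fintype.card_fin]
  set D : Set (Fin (k+1) → 𝕋 × ℝ) := Aset ∪ ⋃ i, Eset i with hDdef
  have hDmeas : MeasurableSet D := hAmeas.union (MeasurableSet.iUnion fun i => Eset_meas i)
  -- disjointness
  have hdisjE : Pairwise (Function.onFun Disjoint (Eset (n := k+1))) := by
    intro i i' hii'
    rw [Function.onFun, Set.disjoint_left]
    rintro p ⟨hi1, hi2⟩ ⟨hi'1, hi'2⟩
    obtain ⟨hS1, hlt1⟩ := hi2 i' (Ne.symm hii') hi'1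
    obtain ⟨hS2, hlt2⟩ := hi'2 i hii' hi1
    obtain ⟨t, ht, hte⟩ := hS1
    obtain ⟨t', ht', hte'⟩ := hS2
    have hsum : ((t + t' : ℝ) : 𝕋) = 0 := by
      rw [AddCircle.coe_add, hte, hte']; abel
    have htt : t + t' = 0 := by
      have hmem : t + t' ∈ Set.Ico (0:ℝ) 1 :=
        ⟨by linarith [ht.1, ht'.1], by linarith [ht.2, ht'.2]⟩
      exact (AddCircle.coe_eq_zero_iff_of_mem_Ico hmem).mp hsum
    have ht0 : t = 0 := by linarith [ht.1, ht'.1]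
    have heq : (p i').1 = (p i).1 := by
      rw [← sub_eq_zero, ← hte, ht0]; simp
    exact absurd (hlt2 heq.symm) (not_lt_of_gt (hlt1 heq))
  have hdisjAE : Disjoint Aset (⋃ i, Eset i) := by
    rw [Set.disjoint_left]
    rintro p hpA hpE
    obtain ⟨_, ⟨i, rfl⟩, hi⟩ := hpE
    have : (p i).2 ≠ 1/2 := by
      have := Set.mem_univ_pi.mp hpA i
      exact this.2
    exact this hi.1
  -- key identity
  have hkey : ∀ p, p ∈ Lset → (p ∈ Cov ↔ p ∉ D) := by
    intro p hp
    have hL' : ∀ j, (p j).2 = 0 ∨ (p j).2 = 1/2 := by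
      intro j
      have := Set.mem_univ_pi.mp hp j
      simpa using this.2
    have hiff := noncover_iff (fun i => (p i).1) (fun i => (p i).2) hL'
    have hmemD : p ∈ D ↔ ((∀ j, (p j).2 ≠ 1/2) ∨
        ∃ i, (p i).2 = 1/2 ∧ ∀ j, j ≠ i → ((p j).2 = 1/2 →
          ((p j).1 - (p i).1 ∈ Shalf ∧ ((p j).1 = (p i).1 → i < j)))) := by
      constructor
      · rintro (hA | hE)
        · left; intro j
          have := Set.mem_univ_pi.mp hA j
          exact this.2
        · right
          obtain ⟨_, ⟨i, rfl⟩, hi⟩ := hE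
          exact ⟨i, hi.1, hi.2⟩
      · rintro (hA | ⟨i, h1, h2⟩)
        · left
          rw [hAdef, Set.mem_univ_pi]
          exact fun j => ⟨Set.mem_univ _, hA j⟩
        · right
          exact Set.mem_iUnion.mpr ⟨i, h1, h2⟩
    constructor
    · intro hc hd
      exact (hiff.mpr (hmemD.mp hd)) hc
    · intro hd
      by_contra hc
      exact hd (hmemD.mpr (hiff.mp hc))
  -- measure computations
  have hCL : μ Cov = μ (Cov ∩ Lset) := by
    refine le_antisymm ?_ (measure_mono Set.inter_subset_left)
    calc μ Cov = μ ((Cov ∩ Lset) ∪ (Cov \ Lset)) := by rw [Set.inter_union_diff]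
      _ ≤ μ (Cov ∩ Lset) + μ (Cov \ Lset) := measure_union_le _ _
      _ ≤ μ (Cov ∩ Lset) + μ Lsetᶜ :=
          add_le_add le_rfl (measure_mono (Set.diff_subset_compl _ _))
      _ = μ (Cov ∩ Lset) := by rw [hLc, add_zero]
  have hDL : μ D = μ (D ∩ Lset) := by
    refine le_antisymm ?_ (measure_mono Set.inter_subset_left)
    calc μ D = μ ((D ∩ Lset) ∪ (D \ Lset)) := by rw [Set.inter_union_diff]
      _ ≤ μ (D ∩ Lset) + μ (D \ Lset) := measure_union_le _ _
      _ ≤ μ (D ∩ Lset) + μ Lsetᶜ :=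
          add_le_add le_rfl (measure_mono (Set.diff_subset_compl _ _))
      _ = μ (D ∩ Lset) := by rw [hLc, add_zero]
  have hCD : Cov ∩ Lset = Lset \ (Lset ∩ D) := by
    ext p
    constructor
    · rintro ⟨hc, hl⟩
      exact ⟨hl, fun hd => ((hkey p hl).mp hc) hd.2⟩
    · rintro ⟨hl, hd⟩
      refine ⟨(hkey p hl).mpr (fun hD => hd ⟨hl, hD⟩), hl⟩
  have hCvol : μ Cov = 1 - μ D := by
    rw [hCL, hCD, measure_diff Set.inter_subset_left
      ((hLmeas.inter hDmeas).nullMeasurableSet) (measure_ne_top μ _), hLvol]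
    congr 1
    rw [hDL, Set.inter_comm]
  -- value of μ D
  have hEvol : ∀ i : Fin (k+1), μ (Eset i)
      = ENNReal.ofReal (2*m) * ENNReal.ofReal (1-m) ^ k := by
    intro i
    rw [hμdef]
    exact Eset_measure m hm0 hm4 ν hν2 hν2c i
  have hDvol : μ D = ENNReal.ofReal ((1-2*m)^(k+1))
      + ENNReal.ofReal ((k+1) * (2*m*(1-m)^k)) := by
    rw [hDdef, measure_union hdisjAE (MeasurableSet.iUnion fun i => Eset_meas i),
      measure_iUnion hdisjE (fun i => Eset_meas i)]
    rw [tsum_fintype]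
    rw [Finset.sum_congr rfl (fun i _ => hEvol i), Finset.sum_const, Finset.card_univ,
      Fintype.card_fin, hAvol]
    congr 1
    · rw [← ENNReal.ofReal_pow (by linarith)]
    · rw [nsmul_eq_mul]
      rw [← ENNReal.ofReal_natCast (k+1), ← ENNReal.ofReal_pow (by linarith),
        ← ENNReal.ofReal_mul (by linarith), ← ENNReal.ofReal_mul (by positivity)]
      congr 1
      push_cast
      ring
  have hDle : μ D ≤ 1 := prob_le_one
  have hfinal : (1 : ℝ) - (μ Cov).toReal = (μ D).toReal := by
    rw [hCvol, ENNReal.toReal_sub_of_le hDle ENNReal.one_ne_top, ENNReal.toReal_one]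
    ring
  have : (μ Cov).toReal = ((Measure.pi fun _ : Fin (k+1) => (volume : Measure 𝕋).prod ν)
      {p | coversCircle (fun i => (p i).1) (fun i => (p i).2)}).toReal := rfl
  rw [← this, hfinal, hDvol, ENNReal.toReal_add ENNReal.ofReal_ne_top ENNReal.ofReal_ne_top,
    ENNReal.toReal_ofReal (pow_nonneg (by linarith) _),
    ENNReal.toReal_ofReal (by
      have h1 : (0:ℝ) ≤ 1 - m := by linarith
      positivity)]
  have hk : k + 1 - 1 = k := by omega
  rw [hk]
  push_cast
  ring

/-- for arcs of law `ν_m = (1-2m)δ₀ + 2m δ_{1/2}`, the probability of not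
covering the circle by `n` such i.i.d. arcs equals `2nm(1-m)^{n-1} + (1-2m)^n`. -/
theorem noncover_two_point (m : ℝ) (hm : m ∈ Set.Ioc (0:ℝ) (1/4)) (n : ℕ) (hn : 1 ≤ n)
    (ν : Measure ℝ) [IsProbabilityMeasure ν]
    (hν : ν = ENNReal.ofReal (1 - 2*m) • Measure.dirac (0:ℝ)
        + ENNReal.ofReal (2*m) • Measure.dirac (1/2 : ℝ)) :
    1 - coverProb ν n = 2*n*m*(1-m)^(n-1) + (1-2*m)^n := by
  exact noncover_two_point' m hm n hn ν hν
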